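/- Let A, X, B ∈ M_n with [[A, X],[X*, B]] positive semidefinite, and let X* = U|X*| be a polar decomposition with U unitary. Then for every s > 0, the matrix s²A − 2s|X*| + U* B U is positive semidefinite. -/

import Mathlib

open Matrix Set ComplexOrder

variable {m : Type*}

namespace Matrix.PosSemidef
variable {n : Type*} [Fintype n] [DecidableEq n] {𝕜 : Type*} [RCLike 𝕜] {A : Matrix n n 𝕜}
noncomputable def sqrt (hA : A.PosSemidef) : Matrix n n 𝕜 :=
  hA.1.eigenvectorUnitary.1 * diagonal ((↑) ∘ (√·) ∘ hA.1.eigenvalues) *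
    (star hA.1.eigenvectorUnitary : Matrix n n 𝕜)
lemma posSemidef_sqrt (hA : A.PosSemidef) : PosSemidef hA.sqrt := by
  apply PosSemidef.mul_mul_conjTranspose_same
  refine posSemidef_diagonal_iff.mpr fun i ↦ ?_
  rw [Function.comp_apply, RCLike.nonneg_iff]
  constructor
  · simp only [RCLike.ofReal_re]
    exact Real.sqrt_nonneg _
  · simp only [RCLike.ofReal_im]
end Matrix.PosSemidef

/-- The modulus `|X| = (XᴴX)^{1/2}` of a matrix. -/
noncomputable def matAbs [Fintype m] [DecidableEq m] (X : Matrix m m ℂ) : Matrix m m ℂ :=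
  (Matrix.posSemidef_conjTranspose_mul_self X).sqrt

theorem matAbs_posSemidef [Fintype m] [DecidableEq m] (X : Matrix m m ℂ) :
    (matAbs X).PosSemidef :=
  (Matrix.posSemidef_conjTranspose_mul_self X).posSemidef_sqrt

/-- Functional calculus: apply `f : ℝ → ℝ` to a Hermitian matrix via its spectral
decomposition (junk value `0` for non-Hermitian input). -/
noncomputable def matFun [Fintype m] [DecidableEq m] (f : ℝ → ℝ) (X : Matrix m m ℂ) :
    Matrix m m ℂ :=
  if h : X.IsHermitian then
    (h.eigenvectorUnitary : Matrix m m ℂ) *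
      Matrix.diagonal (fun i => (f (h.eigenvalues i) : ℂ)) *
      star (h.eigenvectorUnitary : Matrix m m ℂ)
  else 0

/-- Real part `Re A = (A + Aᴴ)/2`. -/
noncomputable def reM (A : Matrix m m ℂ) : Matrix m m ℂ := (1/2 : ℂ) • (A + Aᴴ)

/-- Imaginary part `Im A = (A - Aᴴ)/(2i)`. -/
noncomputable def imM (A : Matrix m m ℂ) : Matrix m m ℂ := (1/(2*Complex.I)) • (A - Aᴴ)

/-- Numerical range `W(A) = {x* A x : x*x = 1}`. -/
def numRange [Fintype m] (A : Matrix m m ℂ) : Set ℂ :=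
  {z | ∃ x : m → ℂ, star x ⬝ᵥ x = 1 ∧ z = star x ⬝ᵥ A.mulVec x}

/-- The sector `S_α = {z : Re z ≥ 0, |Im z| ≤ (Re z) tan α}`. -/
def sector (α : ℝ) : Set ℂ := {z | 0 ≤ z.re ∧ |z.im| ≤ z.re * Real.tan α}

lemma real_smul_mat {n : ℕ} (r : ℝ) (A : Matrix (Fin n) (Fin n) ℂ) :
    r • A = (r : ℂ) • A := by
  ext i j; simp [Matrix.smul_apply, Complex.real_smul]

theorem polar_block_psd {n : ℕ} (A B X U : Matrix (Fin n) (Fin n) ℂ)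
    (h : (Matrix.fromBlocks A X Xᴴ B).PosSemidef)
    (hU : U ∈ Matrix.unitaryGroup (Fin n) ℂ) (hpolar : Xᴴ = U * matAbs Xᴴ) :
    ∀ s : ℝ, 0 < s →
      ((s ^ 2) • A - (2 * s) • matAbs Xᴴ + Uᴴ * B * U).PosSemidef := by
  intro s hs
  have hUU : Uᴴ * U = 1 := by
    have := hU.1; rwa [Matrix.star_eq_conjTranspose] at this
  have hX : X = matAbs Xᴴ * Uᴴ := by
    calc X = (Xᴴ)ᴴ := by rw [conjTranspose_conjTranspose]
    _ = (U * matAbs Xᴴ)ᴴ := by conv_lhs => rw [hpolar]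
    _ = matAbs Xᴴ * Uᴴ := by
        rw [conjTranspose_mul, (matAbs_posSemidef Xᴴ).isHermitian.eq]
  have key : ((s ^ 2 : ℝ)) • A - ((2 * s : ℝ)) • matAbs Xᴴ + Uᴴ * B * U =
      (Matrix.fromRows ((s : ℂ) • (1 : Matrix (Fin n) (Fin n) ℂ)) (-U))ᴴ *
        (Matrix.fromBlocks A X Xᴴ B) *
        (Matrix.fromRows ((s : ℂ) • 1) (-U)) := by
    rw [conjTranspose_fromRows_eq_fromCols_conjTranspose, fromCols_mul_fromBlocks]
    erw [fromCols_mul_fromRows]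
    simp only [conjTranspose_smul, conjTranspose_one, conjTranspose_neg, Matrix.mul_neg,
      Matrix.neg_mul, Matrix.smul_mul, Matrix.mul_smul, Matrix.one_mul, Matrix.mul_one]
    set M := matAbs Xᴴ with hM
    rw [hpolar, hX, real_smul_mat, real_smul_mat]
    have h1 : Uᴴ * (U * M) = M := by rw [← Matrix.mul_assoc, hUU, Matrix.one_mul]
    have h2 : M * Uᴴ * U = M := by rw [Matrix.mul_assoc, hUU, Matrix.mul_one]
    rw [h1]
    simp only [Matrix.add_mul, Matrix.neg_mul, Matrix.smul_mul, h2, Matrix.mul_assoc]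
    rw [Complex.star_def, Complex.conj_ofReal]
    push_cast
    module
  rw [key]
  exact h.conjTranspose_mul_mul_same _
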